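/- Let K be the reference tetrahedron in ℝ³ and let p ≥ 1 be an integer. For every vector polynomial B ∈ (P_p)³ there exists a vector polynomial Φ ∈ (P_p)³ whose normal component vanishes on each face of K such that div(B + Φ) is constant on K, equal to (1/|K|) ∫_K div B dx, where |K| = 1/6 is the volume of K. -/

import Mathlib

open MeasureTheory MvPolynomial Real

noncomputable section

/-- Vertices of the reference tetrahedron: v0=(0,0,0), v1=(1,0,0), v2=(0,1,0), v3=(0,0,1). -/
def vtx : Fin 4 → Fin 3 → ℝ :=
  ![![0,0,0], ![1,0,0], ![0,1,0], ![0,0,1]]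

/-- Barycentric coordinates λ₀ = 1-x-y-z, λ₁ = x, λ₂ = y, λ₃ = z. -/
def lam : Fin 4 → (Fin 3 → ℝ) → ℝ :=
  ![fun x => 1 - x 0 - x 1 - x 2, fun x => x 0, fun x => x 1, fun x => x 2]

/-- The reference tetrahedron K = {x : λ_j(x) ≥ 0 for all j}. -/
def Ktet : Set (Fin 3 → ℝ) := {x | ∀ j : Fin 4, 0 ≤ lam j x}

/-- Face F_j = {x ∈ K : λ_j(x) = 0}. -/
def faceK (j : Fin 4) : Set (Fin 3 → ℝ) := {x ∈ Ktet | lam j x = 0}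

/-- Outward unit normals of the four faces of K. -/
def normalK : Fin 4 → Fin 3 → ℝ :=
  ![fun _ => 1 / Real.sqrt 3, ![-1,0,0], ![0,-1,0], ![0,0,-1]]

/-- (Constant) gradients of the barycentric coordinates. -/
def gradLam : Fin 4 → Fin 3 → ℝ :=
  ![![-1,-1,-1], ![1,0,0], ![0,1,0], ![0,0,1]]

/-- Divergence of a vector polynomial. -/
def divP (Φ : Fin 3 → MvPolynomial (Fin 3) ℝ) : MvPolynomial (Fin 3) ℝ :=
  ∑ i, MvPolynomial.pderiv i (Φ i)

/-- The normal component of the vector polynomial Φ vanishes on every face of K. -/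
def normalVanish (Φ : Fin 3 → MvPolynomial (Fin 3) ℝ) : Prop :=
  ∀ j : Fin 4, ∀ q ∈ faceK j, ∑ i, MvPolynomial.eval q (Φ i) * normalK j i = 0

/-- Divergence of a vector field (as a function). -/
def divF (Φ : (Fin 3 → ℝ) → (Fin 3 → ℝ)) (x : Fin 3 → ℝ) : ℝ :=
  ∑ i, fderiv ℝ Φ x (Pi.single i 1) i

/-- The normal component of the vector field Φ vanishes on every face of K. -/
def normalVanishF (Φ : (Fin 3 → ℝ) → (Fin 3 → ℝ)) : Prop :=
  ∀ j : Fin 4, ∀ q ∈ faceK j, ∑ i, Φ q i * normalK j i = 0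


/-- for every B ∈ (P_p)³ there is Φ ∈ (P_p)³ with vanishing normal component
on each face of K such that div(B+Φ) is constant on K, equal to (1/|K|) ∫_K div B dx,
|K| = 1/6. -/

-- Auxiliary lemmas

def L0 : MvPolynomial (Fin 3) ℝ := 1 - X 0 - X 1 - X 2

def TT (F : Fin 3 → MvPolynomial (Fin 3) ℝ) : MvPolynomial (Fin 3) ℝ :=
  ∑ i, pderiv i (L0 * X i * F i)

lemma pderiv_L0 (j : Fin 3) : pderiv j L0 = -1 := by
  fin_cases j <;>
    simp [L0, pderiv_X, Pi.single_apply]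

lemma X_mul_monomial' (j : Fin 3) (μ : Fin 3 →₀ ℕ) :
    X j * monomial μ (1:ℝ) = monomial (μ + Finsupp.single j 1) 1 := by
  rw [X, monomial_mul, one_mul, add_comm]

lemma monomial_eq_C_mul (μ : Fin 3 →₀ ℕ) (a : ℝ) :
    monomial μ a = C a * monomial μ 1 := by rw [C_mul_monomial, mul_one]

lemma Id1 (j : Fin 3) (μ : Fin 3 →₀ ℕ) :
    pderiv j (L0 * X j * monomial μ (1:ℝ))
      = ((μ j : ℝ) + 1) • (L0 * monomial μ 1) - X j * monomial μ 1 := by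
  rw [mul_assoc, pderiv_mul, pderiv_L0, X_mul_monomial', pderiv_monomial]
  simp only [Finsupp.add_apply, Finsupp.single_eq_same, add_tsub_cancel_right, one_mul,
    smul_eq_C_mul]
  rw [monomial_eq_C_mul μ]
  push_cast
  rw [← X_mul_monomial']
  ring


lemma TT_add (F G : Fin 3 → MvPolynomial (Fin 3) ℝ) : TT (F + G) = TT F + TT G := by
  simp only [TT, Pi.add_apply, mul_add, map_add]
  rw [Finset.sum_add_distrib]

lemma TT_smul (r : ℝ) (F : Fin 3 → MvPolynomial (Fin 3) ℝ) : TT (r • F) = C r * TT F := by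
  simp only [TT, Pi.smul_apply, smul_eq_C_mul, Finset.mul_sum]
  refine Finset.sum_congr rfl fun i _ => ?_
  rw [← pderiv_C_mul]; congr 1; ring

/-- The set of polynomials expressible as `TT F + C c` with controlled degrees. -/
def GoodSet (d : ℕ) : Submodule ℝ (MvPolynomial (Fin 3) ℝ) where
  carrier := {q | ∃ F : Fin 3 → MvPolynomial (Fin 3) ℝ, ∃ c : ℝ,
    (∀ i, F i = 0 ∨ (F i).totalDegree + 1 ≤ d) ∧ q = TT F + C c}
  zero_mem' := ⟨0, 0, fun i => Or.inl rfl, by simp [TT]⟩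
  add_mem' := by
    rintro a b ⟨F, c, hF, rfl⟩ ⟨G, e, hG, rfl⟩
    refine ⟨F + G, c + e, fun i => ?_, by rw [TT_add, map_add]; ring⟩
    rcases hF i with h1 | h1
    · rcases hG i with h2 | h2
      · exact Or.inl (by simp [h1, h2])
      · exact Or.inr (by simpa [h1] using h2)
    · rcases hG i with h2 | h2
      · exact Or.inr (by simpa [h2] using h1)
      · refine Or.inr ?_
        have h3 : ((F + G) i).totalDegree ≤ max (F i).totalDegree (G i).totalDegree :=
          totalDegree_add (F i) (G i)
        rcases max_cases (F i).totalDegree (G i).totalDegree with ⟨hm, _⟩ | ⟨hm, _⟩ <;> omega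
  smul_mem' := by
    rintro r a ⟨F, c, hF, rfl⟩
    refine ⟨r • F, r * c, fun i => ?_, by
      rw [TT_smul, map_mul, smul_eq_C_mul]; ring⟩
    rcases hF i with h1 | h1
    · exact Or.inl (by simp [h1])
    · refine Or.inr ?_
      have h2 : ((r • F) i).totalDegree ≤ (F i).totalDegree := totalDegree_smul_le r (F i)
      omega

lemma TT_sub (F G : Fin 3 → MvPolynomial (Fin 3) ℝ) : TT (F - G) = TT F - TT G := by
  have h : F - G = F + (-1 : ℝ) • G := by funext j; simp; ring
  rw [h, TT_add, TT_smul]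
  simp [smul_eq_C_mul]
  ring

lemma TT_single (i : Fin 3) (f : MvPolynomial (Fin 3) ℝ) :
    TT (Pi.single i f) = pderiv i (L0 * X i * f) := by
  rw [TT, Finset.sum_eq_single i]
  · simp
  · intro j _ hj; simp [Pi.single_eq_of_ne hj]
  · simp

lemma GoodSet_mono {d e : ℕ} (h : d ≤ e) : GoodSet d ≤ GoodSet e := by
  rintro q ⟨F, c, hF, rfl⟩
  exact ⟨F, c, fun i => (hF i).imp id (fun h1 => h1.trans h), rfl⟩

lemma monomial_mem : ∀ (d : ℕ) (m : Fin 3 →₀ ℕ), (∑ j, m j) ≤ d →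
    monomial m (1:ℝ) ∈ GoodSet d := by
  intro d
  induction d with
  | zero =>
    intro m hm
    have : m = 0 := by
      ext j
      have := Finset.sum_eq_zero_iff.mp (Nat.le_zero.mp hm) j (Finset.mem_univ j)
      simpa using this
    subst this
    exact ⟨0, 1, fun i => Or.inl rfl, by simp [TT, monomial_zero']⟩
  | succ d ih =>
    intro m hm
    rcases Nat.lt_or_ge (∑ j, m j) (d+1) with hlt | hge
    · exact GoodSet_mono (Nat.le_succ d) (ih m (by omega))
    have hsum : ∑ j, m j = d + 1 := le_antisymm hm hge
    have hex : ∃ i, m i ≠ 0 := by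
      by_contra hc
      push_neg at hc
      simp [hc] at hsum
    obtain ⟨i, hi⟩ := hex
    set μ : Fin 3 →₀ ℕ := m - Finsupp.single i 1 with hμdef
    have hle : Finsupp.single i 1 ≤ m := by
      rw [Finsupp.single_le_iff]; omega
    have hμ : μ + Finsupp.single i 1 = m := tsub_add_cancel_of_le hle
    have hSμ : ∑ j, μ j = d := by
      have := congrArg (fun f : Fin 3 →₀ ℕ => ∑ j, f j) hμ
      simp only [Finsupp.add_apply, Finset.sum_add_distrib] at this
      have hs : ∑ j, Finsupp.single i 1 j = 1 := by
        rw [Finset.sum_eq_single i]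
        · simp
        · intro j _ hj
          exact Finsupp.single_eq_of_ne' (Ne.symm hj)
        · intro h; exact absurd (Finset.mem_univ i) h
      omega
    -- the real coefficients
    set a : ℝ := ((μ i : ℝ) + 1) / ((d : ℝ) + 4) with ha
    have hd4 : ((d:ℝ) + 4) ≠ 0 := by positivity
    -- E1
    have hcast : (μ 0 : ℝ) + (μ 1 : ℝ) + (μ 2 : ℝ) = (d : ℝ) := by
      rw [Fin.sum_univ_three] at hSμ
      exact_mod_cast congrArg (Nat.cast : ℕ → ℝ) hSμ
    have hc' : C ((μ 0:ℝ)) + C ((μ 1:ℝ)) + C ((μ 2:ℝ)) = (C ((d:ℝ)) : MvPolynomial (Fin 3) ℝ) := by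
      rw [← map_add, ← map_add, hcast]
    set Fc : Fin 3 → MvPolynomial (Fin 3) ℝ := fun _ => monomial μ 1 with hFc
    have E1 : TT Fc
        = C ((d:ℝ)+4) * (L0 * monomial μ 1) - monomial μ 1 := by
      have hs : TT Fc
          = ∑ j, (C ((μ j:ℝ)+1) * (L0 * monomial μ 1) - X j * monomial μ 1) := by
        rw [TT]
        refine Finset.sum_congr rfl fun j _ => ?_
        rw [Id1 j μ, smul_eq_C_mul]
      rw [hs, Fin.sum_univ_three]
      have hL : (X 0 + X 1 + X 2 : MvPolynomial (Fin 3) ℝ) = 1 - L0 := by rw [L0]; ring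
      simp only [map_add, map_one, map_ofNat]
      linear_combination (L0 * monomial μ 1) * hc' - monomial μ 1 * hL
    have hm' : X i * monomial μ (1:ℝ) = monomial m 1 := by
      rw [X_mul_monomial', hμ]
    have E2 : TT (Pi.single i (monomial μ 1))
        = C ((μ i:ℝ)+1) * (L0 * monomial μ 1) - monomial m 1 := by
      rw [TT_single, Id1 i μ, smul_eq_C_mul, hm']
    have hac : (C a : MvPolynomial (Fin 3) ℝ) * C ((d:ℝ)+4) = C ((μ i:ℝ)+1) := by
      rw [← map_mul]; congr 1; rw [ha]; field_simp
    set H : Fin 3 → MvPolynomial (Fin 3) ℝ :=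
      a • Fc - Pi.single i (monomial μ 1) with hH
    have key : monomial m (1:ℝ) = a • monomial μ 1 + TT H := by
      rw [hH, TT_sub, TT_smul, smul_eq_C_mul]
      linear_combination E2 - C a * E1 - (L0 * monomial μ 1) * hac
    rw [key]
    have hmem : monomial μ (1:ℝ) ∈ GoodSet (d+1) :=
      GoodSet_mono (Nat.le_succ d) (ih μ (by omega))
    refine Submodule.add_mem _ (Submodule.smul_mem _ a hmem) ⟨H, 0, fun j => ?_, by simp⟩
    -- degree bound on H j
    have hdeg : (H j).totalDegree ≤ d := by
      have hXμ : (monomial μ (1:ℝ)).totalDegree ≤ d := by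
        refine le_trans (totalDegree_monomial_le _ _) ?_
        rw [Finsupp.sum_fintype _ _ (fun _ => rfl)]
        simp only [id_eq]
        omega
      have h1 : H j = (a - if j = i then 1 else 0) • monomial μ 1 := by
        rw [hH]
        rcases eq_or_ne j i with rfl | hne
        · simp [hFc, sub_smul, Pi.single_eq_same]
        · simp [hFc, Pi.single_eq_of_ne hne, hne]
      rw [h1]
      exact le_trans (totalDegree_smul_le _ _) hXμ
    exact Or.inr (by omega)

lemma good_of_deg (d : ℕ) (q : MvPolynomial (Fin 3) ℝ) (h : q.totalDegree ≤ d) :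
    q ∈ GoodSet d := by
  have big : (∑ m ∈ q.support, monomial m (coeff m q)) ∈ GoodSet d := by
    refine Submodule.sum_mem _ fun m hm => ?_
    have h1 : monomial m (coeff m q) = (coeff m q) • monomial m 1 := by
      rw [smul_monomial, smul_eq_mul, mul_one]
    rw [h1]
    refine Submodule.smul_mem _ _ (monomial_mem d m ?_)
    have h2 : (m.sum fun _ e => e) ≤ q.totalDegree := le_totalDegree hm
    rw [Finsupp.sum_fintype _ _ (fun _ => rfl)] at h2
    omega
  rwa [← q.as_sum] at big

lemma pd_deg (i : Fin 3) (f : MvPolynomial (Fin 3) ℝ) {d : ℕ} (h : f.totalDegree ≤ d) :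
    (pderiv i f).totalDegree ≤ d - 1 := by
  have hrw : pderiv i f = ∑ m ∈ f.support, pderiv i (monomial m (coeff m f)) := by
    rw [← map_sum, ← f.as_sum]
  rw [hrw]
  refine le_trans (totalDegree_finset_sum _ _) (Finset.sup_le fun m hm => ?_)
  rw [pderiv_monomial]
  rcases Nat.eq_zero_or_pos (m i) with h0 | h0
  · simp [h0]
  refine le_trans (totalDegree_monomial_le _ _) ?_
  have hms : (m.sum fun _ e => e) ≤ d := le_trans (le_totalDegree hm) h
  rw [Finsupp.sum_fintype _ _ (fun _ => rfl)] at hms ⊢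
  simp only [id_eq, Finsupp.coe_tsub, Pi.sub_apply, Finsupp.single_apply]
  rw [Fin.sum_univ_three] at hms ⊢
  fin_cases i <;> simp_all <;> omega

lemma mySlice {n : ℕ} (i : Fin (n+1)) (f : (Fin (n+1) → ℝ) → ℝ) (hf : Integrable f) :
    ∫ x, f x = ∫ w : Fin n → ℝ, ∫ t : ℝ, f (i.insertNth t w) := by
  have hmp := (volume_preserving_piFinSuccAbove (fun _ : Fin (n+1) => ℝ) i).symm
  rw [← hmp.integral_comp (MeasurableEquiv.measurableEmbedding _) f]
  have hint : Integrable (fun z : ℝ × (Fin n → ℝ) => f (i.insertNth z.1 z.2)) (volume.prod volume) := by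
    have := (hmp.integrable_comp_emb (MeasurableEquiv.measurableEmbedding _)).2 hf
    simpa [MeasurableEquiv.piFinSuccAbove_symm_apply, Fin.insertNthEquiv, Function.comp_def,
      Measure.volume_eq_prod] using this
  rw [show (fun z : ℝ × (Fin n → ℝ) => f ((MeasurableEquiv.piFinSuccAbove (fun _ => ℝ) i).symm z))
      = fun z : ℝ × (Fin n → ℝ) => f (i.insertNth z.1 z.2) by
        funext z; simp [MeasurableEquiv.piFinSuccAbove_symm_apply, Fin.insertNthEquiv]]
  exact MeasureTheory.integral_prod_symm _ hint

lemma mem_Ktet {x : Fin 3 → ℝ} : x ∈ Ktet ↔ (∀ i, 0 ≤ x i) ∧ ∑ j, x j ≤ 1 := by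
  constructor
  · intro h
    have h0 := h 0; have h1 := h 1; have h2 := h 2; have h3 := h 3
    simp [lam] at h0 h1 h2 h3
    refine ⟨fun i => by fin_cases i <;> assumption, ?_⟩
    rw [Fin.sum_univ_three]; linarith
  · rintro ⟨h1, h2⟩ j
    rw [Fin.sum_univ_three] at h2
    fin_cases j <;> simp [lam] <;> [linarith; exact h1 0; exact h1 1; exact h1 2]

lemma isClosed_Ktet : IsClosed Ktet := by
  have : Ktet = {x : Fin 3 → ℝ | (∀ i, 0 ≤ x i) ∧ ∑ j, x j ≤ 1} := Set.ext fun x => mem_Ktet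
  rw [this]
  have h1 : IsClosed {x : Fin 3 → ℝ | ∀ i, 0 ≤ x i} := by
    have : {x : Fin 3 → ℝ | ∀ i, 0 ≤ x i} = ⋂ i, {x : Fin 3 → ℝ | 0 ≤ x i} := by
      ext x; simp [Set.mem_iInter]
    rw [this]
    exact isClosed_iInter fun i => isClosed_le continuous_const (continuous_apply i)
  have h2 : IsClosed {x : Fin 3 → ℝ | ∑ j, x j ≤ 1} :=
    isClosed_le (by continuity) continuous_const
  exact h1.inter h2

lemma isCompact_Ktet : IsCompact Ktet := by
  refine (isCompact_Icc (a := (0 : Fin 3 → ℝ)) (b := 1)).of_isClosed_subset isClosed_Ktet ?_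
  intro x hx
  obtain ⟨h1, h2⟩ := mem_Ktet.mp hx
  rw [Fin.sum_univ_three] at h2
  have h3 := h1 0; have h4 := h1 1; have h5 := h1 2
  constructor <;> intro i <;> fin_cases i <;> simp only [Pi.zero_apply, Pi.one_apply]
  · exact h3
  · exact h4
  · exact h5
  · show x 0 ≤ 1; linarith
  · show x 1 ≤ 1; linarith
  · show x 2 ≤ 1; linarith

lemma measurableSet_Ktet : MeasurableSet Ktet := isClosed_Ktet.measurableSet

lemma integrableOn_eval (g : MvPolynomial (Fin 3) ℝ) :
    IntegrableOn (fun x => eval x g) Ktet := by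
  exact (MvPolynomial.continuous_eval g).continuousOn.integrableOn_compact isCompact_Ktet

lemma insertNth_mem_Ktet (i : Fin 3) (t : ℝ) (w : Fin 2 → ℝ) :
    i.insertNth t w ∈ Ktet ↔ (∀ k, 0 ≤ w k) ∧ 0 ≤ t ∧ t ≤ 1 - ∑ k, w k := by
  rw [mem_Ktet, Fin.sum_univ_succAbove _ i]
  rw [i.forall_iff_succAbove]
  simp only [Fin.insertNth_apply_same, Fin.insertNth_apply_succAbove]
  constructor
  · rintro ⟨⟨ht, hw⟩, hs⟩; exact ⟨hw, ht, by linarith⟩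
  · rintro ⟨hw, ht, hs⟩; exact ⟨⟨ht, hw⟩, by linarith⟩

lemma hasDerivAt_eval_insertNth {n : ℕ} (i : Fin (n+1)) (w : Fin n → ℝ)
    (P : MvPolynomial (Fin (n+1)) ℝ) (t : ℝ) :
    HasDerivAt (fun s => eval (i.insertNth s w) P)
      (eval (i.insertNth t w) (pderiv i P)) t := by
  induction P using MvPolynomial.induction_on with
  | C a => simpa using hasDerivAt_const t a
  | add p q hp hq => simp only [map_add]; exact hp.add hq
  | mul_X p j hp =>
    have hc : HasDerivAt (fun s => (i.insertNth s w : Fin (n+1) → ℝ) j)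
        (if j = i then 1 else 0) t := by
      rcases eq_or_ne j i with rfl | hne
      · simpa [Fin.insertNth_apply_same] using (hasDerivAt_id' t)
      · obtain ⟨k, rfl⟩ := Fin.exists_succAbove_eq hne
        simp only [Fin.insertNth_apply_succAbove]
        simpa [Fin.succAbove_ne i k] using hasDerivAt_const t (w k)
    have := hp.mul hc
    simp only [pderiv_mul, map_add, map_mul, eval_X] at *
    refine this.congr_deriv ?_
    rcases eq_or_ne j i with rfl | hne
    · simp [pderiv_X_self, Fin.insertNth_apply_same]
    · simp [pderiv_X_of_ne hne, hne]

lemma continuous_insertNth_poly {i : Fin 3} {w : Fin 2 → ℝ} (P : MvPolynomial (Fin 3) ℝ) :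
    Continuous fun t : ℝ => eval (i.insertNth t w) P := by
  refine (MvPolynomial.continuous_eval P).comp ?_
  refine continuous_pi fun j => ?_
  rcases eq_or_ne j i with rfl | hne
  · simpa [Fin.insertNth_apply_same] using continuous_id'
  · obtain ⟨k, rfl⟩ := Fin.exists_succAbove_eq hne
    simp only [Fin.insertNth_apply_succAbove]
    exact continuous_const

lemma integral_eval_pderiv_eq_zero (i : Fin 3) (P : MvPolynomial (Fin 3) ℝ)
    (h0 : ∀ x ∈ Ktet, x i = 0 → eval x P = 0)
    (h1 : ∀ x ∈ Ktet, ∑ j, x j = 1 → eval x P = 0) :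
    ∫ x in Ktet, eval x (pderiv i P) = 0 := by
  rw [← integral_indicator measurableSet_Ktet]
  have hint : Integrable (Ktet.indicator fun x => eval x (pderiv i P)) :=
    (integrable_indicator_iff measurableSet_Ktet).mpr (integrableOn_eval _)
  rw [mySlice i _ hint]
  have hzero : ∀ w : Fin 2 → ℝ,
      ∫ t : ℝ, (Ktet.indicator fun x => eval x (pderiv i P)) (i.insertNth t w) = 0 := by
    intro w
    by_cases hw : ∀ k, 0 ≤ w k
    · set c : ℝ := 1 - ∑ k, w k with hc
      have hsec : ∀ t : ℝ, (Ktet.indicator fun x => eval x (pderiv i P)) (i.insertNth t w)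
          = (Set.Icc (0:ℝ) c).indicator (fun t => eval (i.insertNth t w) (pderiv i P)) t := by
        intro t
        by_cases ht : i.insertNth t w ∈ Ktet
        · rw [Set.indicator_of_mem ht, Set.indicator_of_mem]
          obtain ⟨_, h2, h3⟩ := (insertNth_mem_Ktet i t w).mp ht
          exact ⟨h2, by linarith⟩
        · rw [Set.indicator_of_notMem ht, Set.indicator_of_notMem]
          intro hmem
          exact ht ((insertNth_mem_Ktet i t w).mpr ⟨hw, hmem.1, by linarith [hmem.2]⟩)
      simp only [hsec]
      rw [integral_indicator measurableSet_Icc]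
      rcases le_or_gt 0 c with h0c | h0c
      · have hm1 : i.insertNth c w ∈ Ktet :=
          (insertNth_mem_Ktet i c w).mpr ⟨hw, h0c, le_refl _⟩
        have hm0 : i.insertNth 0 w ∈ Ktet :=
          (insertNth_mem_Ktet i 0 w).mpr ⟨hw, le_refl _, by linarith⟩
        have hb1 : eval (i.insertNth c w) P = 0 := by
          refine h1 _ hm1 ?_
          rw [Fin.sum_univ_succAbove _ i]
          simp only [Fin.insertNth_apply_same, Fin.insertNth_apply_succAbove]
          rw [hc]; ring
        have hb0 : eval (i.insertNth 0 w) P = 0 := by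
          refine h0 _ hm0 ?_
          simp [Fin.insertNth_apply_same]
        rw [integral_Icc_eq_integral_Ioc, ← intervalIntegral.integral_of_le h0c,
          intervalIntegral.integral_eq_sub_of_hasDerivAt
            (f := fun t => eval (i.insertNth t w) P)
            (fun t _ => hasDerivAt_eval_insertNth i w P t)
            ((continuous_insertNth_poly _).intervalIntegrable _ _),
          hb1, hb0, sub_zero]
      · rw [Set.Icc_eq_empty (by linarith), Measure.restrict_empty, integral_zero_measure]
    · push_neg at hw
      obtain ⟨k, hk⟩ := hw
      have hz : ∀ t : ℝ, (Ktet.indicator fun x => eval x (pderiv i P)) (i.insertNth t w) = 0 := by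
        intro t
        refine Set.indicator_of_notMem (fun hmem => ?_) _
        obtain ⟨hw2, _, _⟩ := (insertNth_mem_Ktet i t w).mp hmem
        exact absurd (hw2 k) (not_le.mpr hk)
      simp only [hz, integral_zero]
  have hfz : (fun w : Fin 2 → ℝ => ∫ t : ℝ,
      (Ktet.indicator fun x => eval x (pderiv i P)) (i.insertNth t w)) = fun _ => (0:ℝ) :=
    funext hzero
  rw [hfz, integral_zero]

def K2 : Set (Fin 2 → ℝ) := {w | (∀ k, 0 ≤ w k) ∧ w 0 + w 1 ≤ 1}

lemma measurableSet_K2 : MeasurableSet K2 := by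
  have h1 : K2 = (⋂ k, {w : Fin 2 → ℝ | 0 ≤ w k}) ∩ {w : Fin 2 → ℝ | w 0 + w 1 ≤ 1} := by
    ext w; simp [K2, Set.mem_iInter]
  rw [h1]
  exact MeasurableSet.inter
    (MeasurableSet.iInter fun k =>
      measurableSet_le measurable_const (measurable_pi_apply k))
    (measurableSet_le (by fun_prop) measurable_const)

lemma integrableOn_K2 (f : (Fin 2 → ℝ) → ℝ) (hf : Continuous f) : IntegrableOn f K2 := by
  have hcl : IsClosed K2 := by
    have h1 : K2 = (⋂ k, {w : Fin 2 → ℝ | 0 ≤ w k}) ∩ {w : Fin 2 → ℝ | w 0 + w 1 ≤ 1} := by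
      ext w; simp [K2, Set.mem_iInter]
    rw [h1]
    exact IsClosed.inter
      (isClosed_iInter fun k => isClosed_le continuous_const (continuous_apply k))
      (isClosed_le (by fun_prop) continuous_const)
  have hcomp : IsCompact K2 := by
    refine (isCompact_Icc (a := (0 : Fin 2 → ℝ)) (b := 1)).of_isClosed_subset hcl ?_
    rintro w ⟨hw1, hw2⟩
    have h0 := hw1 0; have h1 := hw1 1
    constructor <;> intro k <;> fin_cases k <;> simp only [Pi.zero_apply, Pi.one_apply]
    · exact h0
    · exact h1
    · show w 0 ≤ 1; linarith
    · show w 1 ≤ 1; linarith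
  exact hf.continuousOn.integrableOn_compact hcomp

lemma antideriv_sq (b r : ℝ) : HasDerivAt (fun r : ℝ => -(b - r)^3/6) ((b - r)^2/2) r := by
  have h1 : HasDerivAt (fun r : ℝ => b - r) (-1) r := (hasDerivAt_id r).const_sub b
  have h2 := ((h1.pow 3).neg).div_const 6
  exact h2.congr_deriv (by ring)

lemma antideriv_lin (b r : ℝ) : HasDerivAt (fun r : ℝ => -(b - r)^2/2) (b - r) r := by
  have h1 : HasDerivAt (fun r : ℝ => b - r) (-1) r := (hasDerivAt_id r).const_sub b
  have h2 := ((h1.pow 2).neg).div_const 2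
  exact h2.congr_deriv (by ring)

lemma integral_lin (b : ℝ) (hb : 0 ≤ b) : ∫ s in Set.Icc (0:ℝ) b, (b - s) = b^2/2 := by
  rw [integral_Icc_eq_integral_Ioc, ← intervalIntegral.integral_of_le hb,
    intervalIntegral.integral_eq_sub_of_hasDerivAt (fun s _ => antideriv_lin b s)
      ((by fun_prop : Continuous fun s : ℝ => b - s).intervalIntegrable _ _)]
  ring

lemma integral_sq : ∫ r in Set.Icc (0:ℝ) 1, (1 - r)^2/2 = 1/6 := by
  rw [integral_Icc_eq_integral_Ioc, ← intervalIntegral.integral_of_le (by norm_num : (0:ℝ) ≤ 1),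
    intervalIntegral.integral_eq_sub_of_hasDerivAt (fun s _ => antideriv_sq 1 s)
      ((by fun_prop : Continuous fun s : ℝ => (1 - s)^2/2).intervalIntegrable _ _)]
  norm_num

lemma vol_Ktet : ∫ x in Ktet, (1:ℝ) = 1/6 := by
  rw [← integral_indicator measurableSet_Ktet]
  have hint : Integrable (Ktet.indicator fun _ => (1:ℝ)) :=
    (integrable_indicator_iff measurableSet_Ktet).mpr
      (integrableOn_const isCompact_Ktet.measure_lt_top.ne)
  rw [mySlice 0 _ hint]
  -- inner integral equals K2 triangle indicator
  have hstep1 : ∀ w : Fin 2 → ℝ,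
      ∫ t : ℝ, (Ktet.indicator fun _ => (1:ℝ)) ((0 : Fin 3).insertNth t w)
        = K2.indicator (fun w => 1 - w 0 - w 1) w := by
    intro w
    by_cases hw : ∀ k, 0 ≤ w k
    · obtain ⟨c, hc⟩ : ∃ c : ℝ, c = 1 - ∑ k, w k := ⟨_, rfl⟩
      have hsum2 : ∑ k, w k = w 0 + w 1 := Fin.sum_univ_two w
      have hsec : ∀ t : ℝ, (Ktet.indicator fun _ => (1:ℝ)) ((0 : Fin 3).insertNth t w)
          = (Set.Icc (0:ℝ) c).indicator (fun _ => (1:ℝ)) t := by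
        intro t
        by_cases ht : (0 : Fin 3).insertNth t w ∈ Ktet
        · rw [Set.indicator_of_mem ht, Set.indicator_of_mem]
          obtain ⟨_, h2, h3⟩ := (insertNth_mem_Ktet 0 t w).mp ht
          exact ⟨h2, by linarith⟩
        · rw [Set.indicator_of_notMem ht, Set.indicator_of_notMem]
          intro hmem
          exact ht ((insertNth_mem_Ktet 0 t w).mpr ⟨hw, hmem.1, by linarith [hmem.2]⟩)
      simp only [hsec]
      rw [integral_indicator measurableSet_Icc]
      rcases le_or_gt 0 c with h0c | h0c
      · rw [setIntegral_const, measureReal_def, Real.volume_Icc, smul_eq_mul, mul_one, sub_zero,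
          ENNReal.toReal_ofReal h0c]
        rw [hc, hsum2] at h0c
        rw [Set.indicator_of_mem (by exact ⟨hw, by linarith⟩ : w ∈ K2)]
        rw [hc, hsum2]; ring
      · rw [Set.Icc_eq_empty (by linarith), Measure.restrict_empty, integral_zero_measure]
        rw [Set.indicator_of_notMem]
        rintro ⟨_, hK⟩
        rw [hc, hsum2] at h0c; linarith
    · push_neg at hw
      obtain ⟨k, hk⟩ := hw
      have hz : ∀ t : ℝ, (Ktet.indicator fun _ => (1:ℝ)) ((0 : Fin 3).insertNth t w) = 0 := by
        intro t
        refine Set.indicator_of_notMem (fun hmem => ?_) _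
        obtain ⟨hw2, _, _⟩ := (insertNth_mem_Ktet 0 t w).mp hmem
        exact absurd (hw2 k) (not_le.mpr hk)
      simp only [hz, integral_zero]
      rw [Set.indicator_of_notMem]
      rintro ⟨hw2, _⟩
      exact absurd (hw2 k) (not_le.mpr hk)
  rw [show (fun w : Fin 2 → ℝ => ∫ t : ℝ,
      (Ktet.indicator fun _ => (1:ℝ)) ((0 : Fin 3).insertNth t w))
    = K2.indicator (fun w => 1 - w 0 - w 1) from funext hstep1]
  -- slice again
  have hint2 : Integrable (K2.indicator fun w => 1 - w 0 - w 1) :=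
    (integrable_indicator_iff measurableSet_K2).mpr (integrableOn_K2 _ (by fun_prop))
  rw [mySlice 0 _ hint2]
  have hstep2 : ∀ u : Fin 1 → ℝ,
      ∫ s : ℝ, K2.indicator (fun w => 1 - w 0 - w 1) ((0 : Fin 2).insertNth s u)
        = (Set.Icc (0:ℝ) 1).indicator (fun r => (1 - r)^2/2) (u 0) := by
    intro u
    have happ0 : ∀ s : ℝ, ((0 : Fin 2).insertNth s u : Fin 2 → ℝ) 0 = s := fun s => by simp
    have happ1 : ∀ s : ℝ, ((0 : Fin 2).insertNth s u : Fin 2 → ℝ) 1 = u 0 := fun s => by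
      have : (1 : Fin 2) = (0 : Fin 2).succAbove 0 := rfl
      rw [this, Fin.insertNth_apply_succAbove]
    by_cases hu : 0 ≤ u 0
    · obtain ⟨b, hb⟩ : ∃ b : ℝ, b = 1 - u 0 := ⟨_, rfl⟩
      have hsec : ∀ s : ℝ, K2.indicator (fun w => 1 - w 0 - w 1) ((0 : Fin 2).insertNth s u)
          = (Set.Icc (0:ℝ) b).indicator (fun s => b - s) s := by
        intro s
        by_cases hs : (0 : Fin 2).insertNth s u ∈ K2
        · rw [Set.indicator_of_mem hs, Set.indicator_of_mem]
          · rw [happ0, happ1, hb]; ring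
          · obtain ⟨hpos, hle⟩ := hs
            rw [happ0, happ1] at hle
            have := hpos 0
            rw [happ0] at this
            exact ⟨this, by rw [hb]; linarith⟩
        · rw [Set.indicator_of_notMem hs, Set.indicator_of_notMem]
          rintro ⟨hs0, hsb⟩
          refine hs ⟨fun k => ?_, ?_⟩
          · fin_cases k <;> simp only [Fin.zero_eta, Fin.mk_one, id_eq] <;>
              [(rw [happ0]; exact hs0); (rw [happ1]; exact hu)]
          · rw [happ0, happ1]; rw [hb] at hsb; linarith
      simp only [hsec]
      rw [integral_indicator measurableSet_Icc]
      rcases le_or_gt 0 b with h0b | h0b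
      · rw [integral_lin b h0b]
        rw [Set.indicator_of_mem (Set.mem_Icc.mpr ⟨hu, by rw [hb] at h0b; linarith⟩)]
        rw [hb]
      · rw [Set.Icc_eq_empty (by linarith), Measure.restrict_empty, integral_zero_measure]
        rw [Set.indicator_of_notMem]
        rintro ⟨_, hle⟩
        rw [hb] at h0b; linarith
    · have hz : ∀ s : ℝ, K2.indicator (fun w => 1 - w 0 - w 1) ((0 : Fin 2).insertNth s u) = 0 := by
        intro s
        refine Set.indicator_of_notMem (fun hmem => ?_) _
        have := hmem.1 1
        rw [happ1] at this
        exact hu this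
      simp only [hz, integral_zero]
      rw [Set.indicator_of_notMem]
      rintro ⟨h0, _⟩
      exact hu h0
  rw [show (fun u : Fin 1 → ℝ => ∫ s : ℝ,
      K2.indicator (fun w => 1 - w 0 - w 1) ((0 : Fin 2).insertNth s u))
    = fun u => (Set.Icc (0:ℝ) 1).indicator (fun r => (1 - r)^2/2) (u 0) from funext hstep2]
  -- reduce Fin 1 → ℝ to ℝ
  have hmp := volume_preserving_funUnique (Fin 1) ℝ
  have := hmp.integral_comp (MeasurableEquiv.measurableEmbedding _)
    (fun r : ℝ => (Set.Icc (0:ℝ) 1).indicator (fun r => (1 - r)^2/2) r)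
  rw [show (fun u : Fin 1 → ℝ => (Set.Icc (0:ℝ) 1).indicator (fun r => (1 - r)^2/2) (u 0))
      = fun u : Fin 1 → ℝ => (Set.Icc (0:ℝ) 1).indicator (fun r => (1 - r)^2/2)
        ((MeasurableEquiv.funUnique (Fin 1) ℝ) u) from rfl]
  exact this.trans (by rw [integral_indicator measurableSet_Icc, integral_sq])


theorem local_correction_to_constant_divergence (p : ℕ) (hp : 1 ≤ p)
    (B : Fin 3 → MvPolynomial (Fin 3) ℝ) (hB : ∀ i, (B i).totalDegree ≤ p) :
    ∃ Φ : Fin 3 → MvPolynomial (Fin 3) ℝ,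
      (∀ i, (Φ i).totalDegree ≤ p) ∧ normalVanish Φ ∧
      ∀ x ∈ Ktet, MvPolynomial.eval x (divP (B + Φ))
        = ((1:ℝ)/6)⁻¹ * ∫ y in Ktet, MvPolynomial.eval y (divP B) := by
  have hdeg : (divP B).totalDegree ≤ p - 1 := by
    refine le_trans (totalDegree_finset_sum _ _) (Finset.sup_le fun i _ => ?_)
    exact pd_deg i (B i) (hB i)
  obtain ⟨F, c₀, hF, hEq⟩ := good_of_deg (p-1) (divP B) hdeg
  have hL0deg : L0.totalDegree ≤ 1 := by
    rw [L0, sub_eq_add_neg, sub_eq_add_neg, sub_eq_add_neg]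
    refine le_trans (totalDegree_add _ _) (max_le (le_trans (totalDegree_add _ _)
      (max_le (le_trans (totalDegree_add _ _) (max_le ?_ ?_)) ?_)) ?_) <;>
      simp [totalDegree_neg, totalDegree_X]
  refine ⟨fun i => -(L0 * X i * F i), fun i => ?_, ?_, ?_⟩
  · -- degree bound
    rcases hF i with h | h
    · simp [h]
    · rw [totalDegree_neg]
      refine le_trans (totalDegree_mul _ _) ?_
      have h2 : (L0 * X i).totalDegree ≤ 2 := by
        refine le_trans (totalDegree_mul _ _) ?_
        rw [totalDegree_X]
        omega
      omega
  · -- normal vanishing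
    intro j q hq
    obtain ⟨hqK, hq0⟩ := hq
    have hev : ∀ i : Fin 3, eval q (-(L0 * X i * F i))
        = -((1 - q 0 - q 1 - q 2) * (q i * eval q (F i))) := by
      intro i
      simp [L0, mul_assoc]
    rw [Fin.sum_univ_three, hev 0, hev 1, hev 2]
    fin_cases j
    · have h0 : 1 - q 0 - q 1 - q 2 = 0 := by simpa [lam] using hq0
      rw [h0]; ring
    · have h0 : q 0 = 0 := by simpa [lam] using hq0
      simp [normalK, h0]
    · have h0 : q 1 = 0 := by simpa [lam] using hq0
      simp [normalK, h0]
    · have h0 : q 2 = 0 := by simpa [lam] using hq0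
      norm_num [normalK, h0, Matrix.cons_val_zero, Matrix.cons_val_one, Matrix.head_cons,
        Matrix.vecHead, Matrix.vecTail]
  · -- constant divergence
    intro x hx
    have hdiv : divP (B + fun i => -(L0 * X i * F i)) = C c₀ := by
      have h1 : divP (B + fun i => -(L0 * X i * F i)) = divP B - TT F := by
        rw [divP, divP, TT, ← Finset.sum_sub_distrib]
        refine Finset.sum_congr rfl fun i _ => ?_
        rw [Pi.add_apply, map_add, map_neg]
        ring
      rw [h1, hEq]
      ring
    rw [hdiv, eval_C]
    -- compute the integral
    have hTTzero : ∫ y in Ktet, eval y (TT F) = 0 := by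
      have hrw : ∀ y : Fin 3 → ℝ, eval y (TT F)
          = ∑ i, eval y (pderiv i (L0 * X i * F i)) := by
        intro y; rw [TT, map_sum]
      rw [show (fun y => eval y (TT F))
          = fun y => ∑ i, eval y (pderiv i (L0 * X i * F i)) from funext hrw]
      rw [integral_finset_sum _ (fun i _ => integrableOn_eval _)]
      refine Finset.sum_eq_zero fun i _ => ?_
      refine integral_eval_pderiv_eq_zero i (L0 * X i * F i) ?_ ?_
      · intro y _ hy0
        simp [hy0]
      · intro y _ hysum
        rw [Fin.sum_univ_three] at hysum
        have : eval y L0 = 0 := by simp [L0]; linarith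
        simp [this]
    have hvol : (volume Ktet).toReal = 1/6 := by
      have := vol_Ktet
      rw [setIntegral_const, smul_eq_mul, mul_one] at this
      exact this
    have hint : ∫ y in Ktet, eval y (divP B) = c₀ * (1/6) := by
      have hrw : ∀ y : Fin 3 → ℝ, eval y (divP B) = eval y (TT F) + c₀ := by
        intro y; rw [hEq]; simp
      rw [show (fun y => eval y (divP B)) = fun y => eval y (TT F) + c₀ from funext hrw]
      rw [integral_add (integrableOn_eval _) (integrableOn_const
        isCompact_Ktet.measure_lt_top.ne)]
      rw [hTTzero, setIntegral_const, smul_eq_mul, measureReal_def, hvol]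
      ring
    rw [hint]
    ring
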